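/- Let (X,f) be a compact TDS, φ continuous, g a nonnegative mistake function (nondecreasing in n and in ε, with lim_{ε→0} lim_{n→∞} g(n,ε)/n = 0). Then for every Z ⊆ X, the Pesin pressure with mistake function equals the classical Pesin pressure: P_Z(φ,g) = P_Z(φ). -/

import Mathlib

open Filter Topology
open scoped ENNReal

namespace Mistake

variable {X : Type*}

/-- Birkhoff sum `S_n φ(x) = ∑_{i<n} φ(T^i x)`. -/
noncomputable def birkhoff (T : X → X) (φ : X → ℝ) (n : ℕ) (x : X) : ℝ :=
  ∑ i ∈ Finset.range n, φ (T^[i] x)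

/-- Open Bowen ball. -/
def bowenBall [MetricSpace X] (T : X → X) (x : X) (n : ℕ) (ε : ℝ) : Set X :=
  {y | ∀ j < n, dist (T^[j] x) (T^[j] y) < ε}

/-- Closed Bowen ball. -/
def closedBowenBall [MetricSpace X] (T : X → X) (x : X) (n : ℕ) (ε : ℝ) : Set X :=
  {y | ∀ j < n, dist (T^[j] x) (T^[j] y) ≤ ε}

/-- Average-metric ball. -/
def avgBall [MetricSpace X] (T : X → X) (x : X) (n : ℕ) (ε : ℝ) : Set X :=
  {y | (1 / n : ℝ) * ∑ i ∈ Finset.range n, dist (T^[i] x) (T^[i] y) < ε}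

/-- Mistake Bowen ball with mistake function `g`. -/
def mistakeBall [MetricSpace X] (T : X → X) (g : ℕ → ℝ → ℝ) (x : X) (n : ℕ) (ε : ℝ) : Set X :=
  {y | ∃ Λ ⊆ Finset.range n, (((Finset.range n) \ Λ).card : ℝ) ≤ g n ε ∧
    ∀ j ∈ Λ, dist (T^[j] x) (T^[j] y) ≤ ε}

/-- `g` is a mistake function: nondecreasing in `n`, and the iterated limit
`lim_{ε→0⁺} lim_{n→∞} g(n,ε)/n = 0`. -/
structure IsMistakeFunction (g : ℕ → ℝ → ℝ) : Prop where
  mono_n : ∀ n ε, g n ε ≤ g (n + 1) ε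
  lim : ∃ L : ℝ → ℝ,
    (∀ ε > (0 : ℝ), Tendsto (fun n : ℕ => g n ε / n) atTop (𝓝 (L ε))) ∧
    Tendsto L (𝓝[>] (0 : ℝ)) (𝓝 0)

/-- Carathéodory set function: infimum over countable covers of `Z` by the balls
`B (xᵢ) nᵢ` with centers in `Z` and lengths `nᵢ ≥ N` of `∑ exp(-nᵢ s + S_{nᵢ}φ(xᵢ))`. -/
noncomputable def mOut (T : X → X) (φ : X → ℝ) (B : X → ℕ → Set X)
    (Z : Set X) (s : ℝ) (N : ℕ) : ℝ≥0∞ :=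
  ⨅ (c : ℕ → X × ℕ) (_ : (∀ i, (c i).1 ∈ Z ∧ N ≤ (c i).2) ∧
      Z ⊆ ⋃ i, B (c i).1 (c i).2),
    ∑' i, ENNReal.ofReal (Real.exp (-((c i).2 : ℝ) * s + birkhoff T φ (c i).2 (c i).1))

/-- The limit as `N → ∞` (the set function is nondecreasing in `N`). -/
noncomputable def mLimit (T : X → X) (φ : X → ℝ) (B : X → ℕ → Set X)
    (Z : Set X) (s : ℝ) : ℝ≥0∞ := ⨆ N, mOut T φ B Z s N

/-- The critical exponent (pressure at a fixed scale). -/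
noncomputable def presAt (T : X → X) (φ : X → ℝ) (B : X → ℕ → Set X) (Z : Set X) : ℝ :=
  sInf {s : ℝ | mLimit T φ B Z s = 0}

/-- The pressure: the limit of the critical exponents as the scale `δ → 0⁺`
(equal to the supremum over `δ > 0` by monotonicity). -/
noncomputable def pres (T : X → X) (φ : X → ℝ) (B : X → ℕ → ℝ → Set X) (Z : Set X) : ℝ :=
  sSup {p : ℝ | ∃ δ > (0 : ℝ), p = presAt T φ (fun x n => B x n δ) Z}

/-- Variant of `mOut` where the centers range over all of `X`. -/
noncomputable def mOutX (T : X → X) (φ : X → ℝ) (B : X → ℕ → Set X)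
    (Z : Set X) (s : ℝ) (N : ℕ) : ℝ≥0∞ :=
  ⨅ (c : ℕ → X × ℕ) (_ : (∀ i, N ≤ (c i).2) ∧ Z ⊆ ⋃ i, B (c i).1 (c i).2),
    ∑' i, ENNReal.ofReal (Real.exp (-((c i).2 : ℝ) * s + birkhoff T φ (c i).2 (c i).1))

noncomputable def presAtX (T : X → X) (φ : X → ℝ) (B : X → ℕ → Set X) (Z : Set X) : ℝ :=
  sInf {s : ℝ | (⨆ N, mOutX T φ B Z s N) = 0}

noncomputable def presX (T : X → X) (φ : X → ℝ) (B : X → ℕ → ℝ → Set X) (Z : Set X) : ℝ :=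
  sSup {p : ℝ | ∃ δ > (0 : ℝ), p = presAtX T φ (fun x n => B x n δ) Z}

/-- Diameter of a finite open cover. -/
noncomputable def coverDiam [MetricSpace X] (𝒰 : Finset (Set X)) : ℝ :=
  sSup (Metric.diam '' (𝒰 : Set (Set X)))

open Classical in
/-- Mistake cylinder: points tracked by some string over `𝒰` differing from `u`
in at most `budget` positions. -/
def mistakeCyl (f : X → X) (𝒰 : Finset (Set X)) (budget : ℝ) {m : ℕ}
    (u : Fin m → Set X) : Set X :=
  {x | ∃ u' : Fin m → Set X, (∀ j, u' j ∈ 𝒰) ∧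
    (((Finset.univ.filter fun j => u' j ≠ u j).card : ℝ) ≤ budget) ∧
    ∀ j : Fin m, f^[(j : ℕ)] x ∈ u' j}

/-- Open-cover set function with mistakes: infimum over countable covers of `Z`
by mistake cylinders of strings of length at least `N`. -/
noncomputable def mCover [MetricSpace X] (f : X → X) (φ : X → ℝ) (𝒰 : Finset (Set X))
    (g : ℕ → ℝ → ℝ) (Z : Set X) (s : ℝ) (N : ℕ) : ℝ≥0∞ :=
  ⨅ (c : ℕ → Σ m : ℕ, Fin m → Set X)
    (_ : (∀ i, N ≤ (c i).1 ∧ ∀ j, (c i).2 j ∈ 𝒰) ∧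
      Z ⊆ ⋃ i, mistakeCyl f 𝒰 (g (c i).1 (coverDiam 𝒰)) (c i).2),
    ∑' i, ENNReal.ofReal (Real.exp (-s * ((c i).1 : ℝ) +
      sSup (birkhoff f φ (c i).1 '' mistakeCyl f 𝒰 (g (c i).1 (coverDiam 𝒰)) (c i).2)))

/-- Open-cover pressure with mistakes for a fixed cover `𝒰`. -/
noncomputable def presCover [MetricSpace X] (f : X → X) (φ : X → ℝ) (𝒰 : Finset (Set X))
    (g : ℕ → ℝ → ℝ) (Z : Set X) : ℝ :=
  sInf {s : ℝ | (⨆ N, mCover f φ 𝒰 g Z s N) = 0}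

end Mistake

namespace Stmt14Aux
open Mistake Filter Topology
open scoped ENNReal NNReal

set_option linter.unusedSectionVars false

variable {X : Type*} [MetricSpace X]

lemma abs_birkhoff_le {f : X → X} {φ : X → ℝ} {C : ℝ} (hC : ∀ x, |φ x| ≤ C) (n : ℕ) (x : X) :
    |birkhoff f φ n x| ≤ n * C := by
  calc |birkhoff f φ n x| ≤ ∑ i ∈ Finset.range n, |φ (f^[i] x)| :=
        Finset.abs_sum_le_sum_abs _ _
    _ ≤ ∑ _i ∈ Finset.range n, C := Finset.sum_le_sum fun i _ => hC _
    _ = n * C := by simp [Finset.sum_const, nsmul_eq_mul]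

lemma mOut_mono_N (f : X → X) (φ : X → ℝ) (B : X → ℕ → Set X) (Z : Set X) (s : ℝ)
    {N N' : ℕ} (h : N ≤ N') : mOut f φ B Z s N ≤ mOut f φ B Z s N' := by
  refine le_iInf fun c => le_iInf fun hc => ?_
  exact iInf₂_le c ⟨fun i => ⟨(hc.1 i).1, h.trans (hc.1 i).2⟩, hc.2⟩

lemma mOut_mono_B {f : X → X} {φ : X → ℝ} {B₁ B₂ : X → ℕ → Set X}
    (h : ∀ x n, B₁ x n ⊆ B₂ x n) (Z : Set X) (s : ℝ) (N : ℕ) :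
    mOut f φ B₂ Z s N ≤ mOut f φ B₁ Z s N := by
  refine le_iInf fun c => le_iInf fun hc => ?_
  exact iInf₂_le c ⟨hc.1, hc.2.trans (Set.iUnion_mono fun i => h _ _)⟩

lemma one_le_mOut {f : X → X} {φ : X → ℝ} {C : ℝ} (hC : ∀ x, |φ x| ≤ C)
    (B : X → ℕ → Set X) (Z : Set X) {s : ℝ} (hs : s ≤ -C) (N : ℕ) :
    1 ≤ mOut f φ B Z s N := by
  refine le_iInf fun c => le_iInf fun hc => ?_
  refine le_trans ?_ (ENNReal.le_tsum 0)
  rw [ENNReal.one_le_ofReal]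
  refine Real.one_le_exp ?_
  have h1 : -(((c 0).2 : ℝ)) * C ≤ birkhoff f φ (c 0).2 (c 0).1 := by
    have h := abs_le.1 (abs_birkhoff_le (f := f) hC (c 0).2 (c 0).1)
    linarith [h.1]
  have h2 : (0:ℝ) ≤ ((c 0).2 : ℝ) := Nat.cast_nonneg _
  nlinarith

lemma zeroset_bddBelow {f : X → X} {φ : X → ℝ} {C : ℝ} (hC : ∀ x, |φ x| ≤ C)
    (B : X → ℕ → Set X) (Z : Set X) :
    ∀ s ∈ {s : ℝ | mLimit f φ B Z s = 0}, -C - 1 ≤ s := by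
  intro s hs
  by_contra hlt
  push_neg at hlt
  have h1 : (1 : ℝ≥0∞) ≤ mOut f φ B Z s 0 := one_le_mOut hC B Z (by linarith) 0
  have h2 : mOut f φ B Z s 0 ≤ mLimit f φ B Z s := le_iSup (fun N => mOut f φ B Z s N) 0
  rw [Set.mem_setOf_eq.mp hs] at h2
  exact absurd (h1.trans h2) (by simp)

lemma bowen_subset_mistake {f : X → X} {g : ℕ → ℝ → ℝ} (hg0 : ∀ n ε, 0 ≤ g n ε)
    (x : X) (n : ℕ) (δ : ℝ) : bowenBall f x n δ ⊆ mistakeBall f g x n δ := by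
  intro y hy
  exact ⟨Finset.range n, le_refl _, by simpa using hg0 n δ,
    fun j hj => le_of_lt (hy j (Finset.mem_range.1 hj))⟩

end Stmt14Aux
namespace Stmt14Aux
open Mistake Filter Topology
open scoped ENNReal NNReal

lemma binom_sum_le (n G : ℕ) (γ : ℝ) (h1 : 0 < γ) (h2 : γ ≤ 1/2) (hGn : G ≤ n)
    (hG : (G : ℝ) ≤ γ * n) :
    (∑ k ∈ Finset.range (G+1), (n.choose k : ℝ)) ≤
      Real.exp (n * (γ * Real.log (1/γ) + Real.log (1/(1-γ)))) := by
  have hγ1 : γ < 1 := by linarith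
  have h1γ : 0 < 1 - γ := by linarith
  have hpos : 0 < γ ^ G * (1-γ) ^ (n - G) := by positivity
  have key : (∑ k ∈ Finset.range (G+1), (n.choose k : ℝ)) * (γ^G * (1-γ)^(n-G)) ≤ 1 := by
    rw [Finset.sum_mul]
    have step1 : ∑ k ∈ Finset.range (G+1), (n.choose k : ℝ) * (γ^G * (1-γ)^(n-G)) ≤
        ∑ k ∈ Finset.range (G+1), (n.choose k : ℝ) * (γ^k * (1-γ)^(n-k)) := by
      refine Finset.sum_le_sum fun k hk => ?_
      have hkG : k ≤ G := Nat.lt_succ_iff.1 (Finset.mem_range.1 hk)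
      refine mul_le_mul_of_nonneg_left ?_ (Nat.cast_nonneg _)
      have e1 : γ ^ G = γ ^ k * γ ^ (G - k) := by
        rw [← pow_add]; congr 1; omega
      have e2 : (1-γ) ^ (n - k) = (1-γ) ^ (n - G) * (1-γ) ^ (G - k) := by
        rw [← pow_add]; congr 1; omega
      rw [e1, e2]
      have hpow : γ ^ (G - k) ≤ (1-γ) ^ (G - k) := pow_le_pow_left₀ h1.le (by linarith) _
      have p1 : (0:ℝ) ≤ γ ^ k := by positivity
      have p2 : (0:ℝ) ≤ (1-γ) ^ (n - G) := by positivity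
      calc γ ^ k * γ ^ (G - k) * ((1-γ)^(n-G))
          ≤ γ ^ k * (1-γ) ^ (G - k) * ((1-γ)^(n-G)) := by
            refine mul_le_mul_of_nonneg_right (mul_le_mul_of_nonneg_left hpow p1) p2
        _ = γ ^ k * ((1-γ)^(n-G) * (1-γ)^(G-k)) := by ring
    refine step1.trans ?_
    have step2 : ∑ k ∈ Finset.range (G+1), (n.choose k : ℝ) * (γ^k * (1-γ)^(n-k)) ≤
        ∑ k ∈ Finset.range (n+1), (n.choose k : ℝ) * (γ^k * (1-γ)^(n-k)) := by
      refine Finset.sum_le_sum_of_subset_of_nonneg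
        (Finset.range_subset_range.2 (by omega)) (fun k _ _ => by positivity)
    have h5 := add_pow γ (1-γ) n
    have h3 : (γ + (1-γ)) ^ n = (1:ℝ) := by norm_num
    rw [h3] at h5
    have h4 : ∑ k ∈ Finset.range (n+1), (n.choose k : ℝ) * (γ^k * (1-γ)^(n-k))
        = ∑ m ∈ Finset.range (n+1), γ ^ m * (1 - γ) ^ (n - m) * (n.choose m : ℝ) :=
      Finset.sum_congr rfl fun k _ => by ring
    exact step2.trans (le_of_eq (h4.trans h5.symm))
  have hS0 : (0:ℝ) ≤ ∑ k ∈ Finset.range (G+1), (n.choose k : ℝ) :=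
    Finset.sum_nonneg fun k _ => Nat.cast_nonneg _
  have hle : (∑ k ∈ Finset.range (G+1), (n.choose k : ℝ)) ≤ (γ^G * (1-γ)^(n-G))⁻¹ := by
    rw [← one_div, le_div_iff₀ hpos]; exact key
  refine hle.trans ?_
  have eγ : γ ^ G = Real.exp (G * Real.log γ) := by
    rw [← Real.exp_log (pow_pos h1 G), Real.log_pow]
  have eβ : (1-γ) ^ (n-G) = Real.exp (((n-G : ℕ) : ℝ) * Real.log (1-γ)) := by
    rw [← Real.exp_log (pow_pos h1γ (n-G)), Real.log_pow]
  rw [eγ, eβ, ← Real.exp_add, ← Real.exp_neg, Real.exp_le_exp]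
  have hc : ((n - G : ℕ):ℝ) = (n:ℝ) - G := Nat.cast_sub hGn
  rw [hc]
  have l1 : Real.log (1/γ) = - Real.log γ := by rw [one_div, Real.log_inv]
  have l2 : Real.log (1/(1-γ)) = - Real.log (1-γ) := by rw [one_div, Real.log_inv]
  have lγpos : 0 ≤ Real.log (1/γ) := Real.log_nonneg (one_le_one_div h1 hγ1.le)
  have lβpos : 0 ≤ Real.log (1/(1-γ)) := Real.log_nonneg (one_le_one_div h1γ (by linarith))
  have hGn' : (G:ℝ) ≤ (n:ℝ) := Nat.cast_le.2 hGn
  have hG0 : (0:ℝ) ≤ G := Nat.cast_nonneg _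
  rw [l1] at *
  rw [l2] at *
  nlinarith [lγpos, lβpos, hG, hGn', hG0]

end Stmt14Aux
namespace Stmt14Aux
open Mistake Filter Topology
open scoped ENNReal NNReal

set_option linter.unusedSectionVars false

variable {X : Type*} [MetricSpace X]

lemma core_cover (f : X → X) (φ : X → ℝ) (g : ℕ → ℝ → ℝ)
    (Z : Set X) (x : X) (n : ℕ) (ε δ γ C v : ℝ) (E : Finset X)
    (hε : 0 < ε) (hγ0 : 0 < γ) (hγ2 : γ ≤ 1/2)
    (hgn : g n ε ≤ γ * n)
    (hC : ∀ y, |φ y| ≤ C) (hC0 : 0 ≤ C)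
    (hv : ∀ a b : X, dist a b ≤ ε → |φ a - φ b| ≤ v) (hv0 : 0 ≤ v)
    (hE : ∀ y : X, ∃ e ∈ E, dist y e ≤ δ/4) (hEne : E.Nonempty)
    (hδε : ε ≤ δ/4) (hδ0 : 0 < δ) :
    ∃ F : Finset X,
      (∀ z ∈ F, z ∈ Z ∧ birkhoff f φ n z ≤ birkhoff f φ n x + n * (v + 2*γ*C)) ∧
      ((F.card : ℝ) ≤ Real.exp (n * (γ * Real.log (1/γ) + Real.log (1/(1-γ))
          + γ * Real.log E.card))) ∧
      Z ∩ mistakeBall f g x n ε ⊆ ⋃ z ∈ F, bowenBall f z n δ := by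
  classical
  set G : ℕ := ⌊γ * n⌋₊ with hGdef
  have hγn0 : (0:ℝ) ≤ γ * n := by positivity
  have hGγ : (G : ℝ) ≤ γ * n := Nat.floor_le hγn0
  have hGn : G ≤ n := by
    have : (G:ℝ) ≤ (n:ℝ) := hGγ.trans (by nlinarith [Nat.cast_nonneg (α := ℝ) n])
    exact_mod_cast this
  set PP : Finset (Finset ℕ) :=
    (Finset.range (G+1)).biUnion (fun k => Finset.powersetCard k (Finset.range n)) with hPP
  have memPP : ∀ D : Finset ℕ, D ∈ PP ↔ D ⊆ Finset.range n ∧ D.card ≤ G := by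
    intro D
    simp only [hPP, Finset.mem_biUnion, Finset.mem_range, Finset.mem_powersetCard]
    constructor
    · rintro ⟨k, hk, hsub, hcard⟩; exact ⟨hsub, by omega⟩
    · rintro ⟨hsub, hcard⟩; exact ⟨D.card, by omega, hsub, rfl⟩
  set T : Finset (Σ D : Finset ℕ, ∀ j ∈ D, X) :=
    PP.sigma (fun D => D.pi (fun _ => E)) with hT
  set Sp : (Σ D : Finset ℕ, ∀ j ∈ D, X) → Set X := fun p =>
    {z | (∀ j < n, j ∉ p.1 → dist (f^[j] x) (f^[j] z) ≤ ε) ∧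
      ∀ j, ∀ hj : j ∈ p.1, dist (p.2 j hj) (f^[j] z) ≤ δ/4} with hSp
  set center : (Σ D : Finset ℕ, ∀ j ∈ D, X) → X := fun p =>
    if h : (Z ∩ Sp p).Nonempty then h.choose else x with hcenter
  refine ⟨(T.filter (fun p => (Z ∩ Sp p).Nonempty)).image center, ?_, ?_, ?_⟩
  · -- membership & Birkhoff bound
    intro z hz
    obtain ⟨p, hp, rfl⟩ := Finset.mem_image.1 hz
    rw [Finset.mem_filter] at hp
    obtain ⟨hpT, hne⟩ := hp
    have hzmem : center p ∈ Z ∩ Sp p := by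
      rw [hcenter]; simp only [dif_pos hne]; exact hne.choose_spec
    refine ⟨hzmem.1, ?_⟩
    -- Birkhoff estimate
    have hp1 : p.1 ⊆ Finset.range n ∧ p.1.card ≤ G := by
      have := (Finset.mem_sigma.1 hpT).1
      exact (memPP p.1).1 this
    have key : birkhoff f φ n (center p) - birkhoff f φ n x ≤
        ∑ j ∈ Finset.range n, (v + if j ∈ p.1 then 2*C else 0) := by
      rw [birkhoff, birkhoff, ← Finset.sum_sub_distrib]
      refine Finset.sum_le_sum fun j hj => ?_
      by_cases hjp : j ∈ p.1
      · simp only [hjp, if_true]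
        have h1 := hC (f^[j] (center p)); have h2 := hC (f^[j] x)
        have := abs_le.1 h1; have := abs_le.1 h2
        rw [abs_le] at h1 h2; linarith [h1.1, h1.2, h2.1, h2.2]
      · simp only [hjp, if_false]
        have hd : dist (f^[j] (center p)) (f^[j] x) ≤ ε := by
          rw [dist_comm]
          exact hzmem.2.1 j (Finset.mem_range.1 hj) hjp
        have := abs_le.1 (hv _ _ hd)
        linarith [this.2]
    have hsum : ∑ j ∈ Finset.range n, (v + if j ∈ p.1 then 2*C else 0)
        ≤ n * v + 2*C*G := by
      rw [Finset.sum_add_distrib, Finset.sum_const, Finset.card_range, nsmul_eq_mul]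
      have : ∑ j ∈ Finset.range n, (if j ∈ p.1 then 2*C else 0)
          = ∑ j ∈ Finset.range n ∩ p.1, 2*C := by
        rw [Finset.sum_ite_mem]
      rw [this, Finset.sum_const, nsmul_eq_mul]
      have hcard : (Finset.range n ∩ p.1).card ≤ G :=
        le_trans (Finset.card_le_card Finset.inter_subset_right) hp1.2
      have : ((Finset.range n ∩ p.1).card : ℝ) ≤ (G:ℝ) := Nat.cast_le.2 hcard
      nlinarith
    have hfin : 2*C*(G:ℝ) ≤ n * (2*γ*C) := by nlinarith
    nlinarith [key, hsum]
  · -- cardinality bound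
    have hK1 : 1 ≤ E.card := hEne.card_pos
    have hTcard : T.card ≤ (∑ k ∈ Finset.range (G+1), n.choose k) * E.card ^ G := by
      rw [hT, Finset.card_sigma]
      have step : ∀ D ∈ PP, (D.pi (fun _ => E)).card ≤ E.card ^ G := by
        intro D hD
        rw [Finset.card_pi, Finset.prod_const]
        exact Nat.pow_le_pow_right hK1 ((memPP D).1 hD).2
      calc ∑ D ∈ PP, (D.pi (fun _ => E)).card ≤ ∑ _D ∈ PP, E.card ^ G :=
            Finset.sum_le_sum step
        _ = PP.card * E.card ^ G := by rw [Finset.sum_const, smul_eq_mul]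
        _ ≤ (∑ k ∈ Finset.range (G+1), n.choose k) * E.card ^ G := by
            refine Nat.mul_le_mul_right _ ?_
            calc PP.card ≤ ∑ k ∈ Finset.range (G+1), (Finset.powersetCard k (Finset.range n)).card :=
                  Finset.card_biUnion_le
              _ = ∑ k ∈ Finset.range (G+1), n.choose k := by
                  refine Finset.sum_congr rfl fun k _ => ?_
                  rw [Finset.card_powersetCard, Finset.card_range]
    have hFT : ((T.filter (fun p => (Z ∩ Sp p).Nonempty)).image center).card ≤ T.card :=
      le_trans (Finset.card_image_le) (Finset.card_filter_le _ _)
    have hcast : (((T.filter (fun p => (Z ∩ Sp p).Nonempty)).image center).card : ℝ)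
        ≤ (∑ k ∈ Finset.range (G+1), (n.choose k : ℝ)) * (E.card:ℝ) ^ G := by
      have := le_trans hFT hTcard
      have := Nat.cast_le (α := ℝ) |>.2 this
      push_cast at this ⊢
      exact this
    refine hcast.trans ?_
    have hb := binom_sum_le n G γ hγ0 hγ2 hGn hGγ
    have hEG : ((E.card:ℝ)) ^ G ≤ Real.exp (γ * n * Real.log E.card) := by
      have hE0 : (0:ℝ) < E.card := by exact_mod_cast hK1
      have : ((E.card:ℝ)) ^ G = Real.exp (G * Real.log E.card) := by
        rw [← Real.exp_log (pow_pos hE0 G), Real.log_pow]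
      rw [this, Real.exp_le_exp]
      have hlogE : 0 ≤ Real.log (E.card:ℝ) := Real.log_nonneg (by exact_mod_cast hK1)
      nlinarith
    calc (∑ k ∈ Finset.range (G+1), (n.choose k : ℝ)) * (E.card:ℝ) ^ G
        ≤ Real.exp (n * (γ * Real.log (1/γ) + Real.log (1/(1-γ))))
          * Real.exp (γ * n * Real.log E.card) := by
          refine mul_le_mul hb hEG (by positivity) (Real.exp_nonneg _)
      _ = Real.exp (n * (γ * Real.log (1/γ) + Real.log (1/(1-γ)) + γ * Real.log E.card)) := by
          rw [← Real.exp_add]; ring_nf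
  · -- covering
    rintro y ⟨hyZ, hyMB⟩
    obtain ⟨Λ, hΛ, hcard, hdist⟩ := hyMB
    set D : Finset ℕ := Finset.range n \ Λ with hD
    have hDsub : D ⊆ Finset.range n := Finset.sdiff_subset
    have hDcard : D.card ≤ G := by
      refine Nat.le_floor ?_
      exact le_trans hcard hgn
    set a : ∀ j ∈ D, X := fun j _ => (hE (f^[j] y)).choose with ha
    set p : Σ D : Finset ℕ, ∀ j ∈ D, X := ⟨D, a⟩ with hp
    have hpT : p ∈ T := by
      rw [hT, Finset.mem_sigma]
      refine ⟨(memPP D).2 ⟨hDsub, hDcard⟩, ?_⟩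
      rw [Finset.mem_pi]
      intro j hj
      exact (hE (f^[j] y)).choose_spec.1
    have hySp : y ∈ Sp p := by
      constructor
      · intro j hjn hjD
        have hjΛ : j ∈ Λ := by
          by_contra hjΛ
          exact hjD (Finset.mem_sdiff.2 ⟨Finset.mem_range.2 hjn, hjΛ⟩)
        exact hdist j hjΛ
      · intro j hj
        rw [dist_comm]
        exact (hE (f^[j] y)).choose_spec.2
    have hne : (Z ∩ Sp p).Nonempty := ⟨y, hyZ, hySp⟩
    have hzmem : center p ∈ Z ∩ Sp p := by
      rw [hcenter]; simp only [dif_pos hne]; exact hne.choose_spec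
    refine Set.mem_iUnion₂.2 ⟨center p, ?_, ?_⟩
    · exact Finset.mem_image_of_mem center (Finset.mem_filter.2 ⟨hpT, hne⟩)
    · intro j hjn
      by_cases hjD : j ∈ D
      · have h1 := hzmem.2.2 j hjD
        have h2 := (hE (f^[j] y)).choose_spec.2
        calc dist (f^[j] (center p)) (f^[j] y)
            ≤ dist (f^[j] (center p)) (a j hjD) + dist (a j hjD) (f^[j] y) := dist_triangle _ _ _
          _ ≤ δ/4 + δ/4 := by
              refine add_le_add (by rw [dist_comm]; exact h1) (by rw [dist_comm]; exact h2)
          _ < δ := by linarith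
      · have h1 := hzmem.2.1 j hjn hjD
        have hjΛ : j ∈ Λ := by
          by_contra hjΛ
          exact hjD (Finset.mem_sdiff.2 ⟨Finset.mem_range.2 hjn, hjΛ⟩)
        have h2 := hdist j hjΛ
        calc dist (f^[j] (center p)) (f^[j] y)
            ≤ dist (f^[j] (center p)) (f^[j] x) + dist (f^[j] x) (f^[j] y) := dist_triangle _ _ _
          _ ≤ ε + ε := add_le_add (by rw [dist_comm]; exact h1) h2
          _ < δ := by linarith

end Stmt14Aux
namespace Stmt14Aux
open Mistake Filter Topology
open scoped ENNReal NNReal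

set_option linter.unusedSectionVars false

lemma exists_enum {α : Type*} (L : ℕ → ℕ) (hL : ∀ i, 0 < L i) (w : ∀ i, Fin (L i) → α)
    (t : α → ℝ≥0∞) :
    ∃ c : ℕ → α, (∀ m, ∃ i k, c m = w i k) ∧ (∀ i k, ∃ m, c m = w i k) ∧
      ∑' m, t (c m) = ∑' i, ∑ k, t (w i k) := by
  classical
  haveI : Infinite (Σ i : ℕ, Fin (L i)) :=
    Infinite.of_injective (fun i : ℕ => (⟨i, ⟨0, hL i⟩⟩ : Σ i : ℕ, Fin (L i)))
      (fun a b h => congrArg Sigma.fst h)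
  haveI : Denumerable (Σ i : ℕ, Fin (L i)) := Denumerable.ofEncodableOfInfinite _
  set e := Denumerable.eqv (Σ i : ℕ, Fin (L i)) with he
  refine ⟨fun m => (fun p : Σ i : ℕ, Fin (L i) => w p.1 p.2) (e.symm m), ?_, ?_, ?_⟩
  · intro m; exact ⟨(e.symm m).1, (e.symm m).2, rfl⟩
  · intro i k
    refine ⟨e ⟨i, k⟩, ?_⟩
    show w (e.symm (e ⟨i, k⟩)).1 (e.symm (e ⟨i, k⟩)).2 = w i k
    have h := e.symm_apply_apply ⟨i, k⟩
    rw [h]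
  · calc ∑' m, t (w (e.symm m).1 (e.symm m).2)
        = ∑' p : Σ i : ℕ, Fin (L i), t (w p.1 p.2) :=
          e.symm.tsum_eq (fun p : Σ i : ℕ, Fin (L i) => t (w p.1 p.2))
      _ = ∑' i, ∑' k : Fin (L i), t (w i k) := ENNReal.tsum_sigma' _
      _ = ∑' i, ∑ k : Fin (L i), t (w i k) := by
          refine tsum_congr fun i => tsum_fintype _

variable {X : Type*} [MetricSpace X]

lemma sum_fin_le (f : X → X) (φ : X → ℝ) (n : ℕ) (x : X) (F : Finset X)
    (a b s : ℝ) (ha0 : 0 ≤ a) (hb0 : 0 ≤ b)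
    (hcard : (F.card : ℝ) ≤ Real.exp (n * a))
    (hbirk : ∀ z ∈ F, birkhoff f φ n z ≤ birkhoff f φ n x + n * b) :
    ∑ k : Fin (F.card + 1), ENNReal.ofReal (Real.exp (-(n:ℝ) * (s + (a + b)) +
        birkhoff f φ n (Fin.cons (α := fun _ => X) x (fun k' => ((F.equivFin.symm k' : X))) k)))
      ≤ 2 * ENNReal.ofReal (Real.exp (-(n:ℝ) * s + birkhoff f φ n x)) := by
  have hterm : ∀ k : Fin (F.card + 1),
      ENNReal.ofReal (Real.exp (-(n:ℝ) * (s + (a + b)) +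
        birkhoff f φ n (Fin.cons (α := fun _ => X) x (fun k' => ((F.equivFin.symm k' : X))) k)))
      ≤ ENNReal.ofReal (Real.exp (-(n:ℝ) * s - n * a + birkhoff f φ n x)) := by
    intro k
    refine ENNReal.ofReal_le_ofReal (Real.exp_le_exp.2 ?_)
    have hbk : birkhoff f φ n (Fin.cons (α := fun _ => X) x (fun k' => ((F.equivFin.symm k' : X))) k)
        ≤ birkhoff f φ n x + n * b := by
      induction k using Fin.cases with
      | zero =>
          rw [Fin.cons_zero]
          have : (0:ℝ) ≤ (n:ℝ) * b := by positivity
          linarith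
      | succ k' =>
          rw [Fin.cons_succ]
          exact hbirk _ (Finset.coe_mem (F.equivFin.symm k'))
    nlinarith [Nat.cast_nonneg (α := ℝ) n]
  calc ∑ k : Fin (F.card + 1), ENNReal.ofReal (Real.exp (-(n:ℝ) * (s + (a + b)) +
        birkhoff f φ n (Fin.cons (α := fun _ => X) x (fun k' => ((F.equivFin.symm k' : X))) k)))
      ≤ (Finset.univ : Finset (Fin (F.card + 1))).card •
        ENNReal.ofReal (Real.exp (-(n:ℝ) * s - n * a + birkhoff f φ n x)) :=
        Finset.sum_le_card_nsmul _ _ _ (fun k _ => hterm k)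
    _ = ((F.card + 1 : ℕ) : ℝ≥0∞) *
        ENNReal.ofReal (Real.exp (-(n:ℝ) * s - n * a + birkhoff f φ n x)) := by
        rw [nsmul_eq_mul, Finset.card_univ, Fintype.card_fin]
    _ ≤ 2 * ENNReal.ofReal (Real.exp (-(n:ℝ) * s + birkhoff f φ n x)) := by
        rw [← ENNReal.ofReal_natCast, ← ENNReal.ofReal_mul (by positivity),
          ← ENNReal.ofReal_ofNat, ← ENNReal.ofReal_mul (by norm_num)]
        refine ENNReal.ofReal_le_ofReal ?_
        have hL2 : ((F.card + 1 : ℕ) : ℝ) ≤ 2 * Real.exp (n * a) := by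
          have h2 : (1:ℝ) ≤ Real.exp ((n:ℝ) * a) := Real.one_le_exp (by positivity)
          push_cast
          linarith
        calc ((F.card + 1 : ℕ) : ℝ) * Real.exp (-(n:ℝ) * s - n * a + birkhoff f φ n x)
            ≤ (2 * Real.exp (n * a)) *
              Real.exp (-(n:ℝ) * s - n * a + birkhoff f φ n x) :=
              mul_le_mul_of_nonneg_right hL2 (Real.exp_nonneg _)
          _ = 2 * Real.exp (-(n:ℝ) * s + birkhoff f φ n x) := by
              rw [mul_assoc, ← Real.exp_add]; ring_nf

lemma mOut_cl_le (f : X → X) (φ : X → ℝ) (g : ℕ → ℝ → ℝ) (Z : Set X)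
    (ε δ γ C v s : ℝ) (E : Finset X) (N : ℕ)
    (hε : 0 < ε) (hγ0 : 0 < γ) (hγ2 : γ ≤ 1/2)
    (hC : ∀ y, |φ y| ≤ C) (hC0 : 0 ≤ C)
    (hv : ∀ a b : X, dist a b ≤ ε → |φ a - φ b| ≤ v) (hv0 : 0 ≤ v)
    (hE : ∀ y : X, ∃ e ∈ E, dist y e ≤ δ/4) (hEne : E.Nonempty)
    (hδε : ε ≤ δ/4) (hδ0 : 0 < δ)
    (hgN : ∀ n, N ≤ n → g n ε ≤ γ * n)
    (c : ℕ → X × ℕ)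
    (hc : (∀ i, (c i).1 ∈ Z ∧ N ≤ (c i).2) ∧
      Z ⊆ ⋃ i, mistakeBall f g (c i).1 (c i).2 ε) :
    mOut f φ (fun x n => bowenBall f x n δ) Z
      (s + ((γ*Real.log (1/γ) + Real.log (1/(1-γ)) + γ*Real.log E.card) + (v + 2*γ*C))) N
      ≤ 2 * ∑' i, ENNReal.ofReal
          (Real.exp (-((c i).2:ℝ) * s + birkhoff f φ (c i).2 (c i).1)) := by
  classical
  set a : ℝ := γ*Real.log (1/γ) + Real.log (1/(1-γ)) + γ*Real.log E.card with ha
  set b : ℝ := v + 2*γ*C with hb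
  have ha0 : 0 ≤ a := by
    have l1 : 0 ≤ Real.log (1/γ) := Real.log_nonneg (one_le_one_div hγ0 (by linarith))
    have l2 : 0 ≤ Real.log (1/(1-γ)) := Real.log_nonneg (one_le_one_div (by linarith) (by linarith))
    have l3 : 0 ≤ Real.log (E.card:ℝ) := Real.log_nonneg (by exact_mod_cast hEne.card_pos)
    rw [ha]; positivity
  have hb0 : 0 ≤ b := by rw [hb]; positivity
  have hcore : ∀ i : ℕ, ∃ F : Finset X,
      (∀ z ∈ F, z ∈ Z ∧ birkhoff f φ (c i).2 z ≤ birkhoff f φ (c i).2 (c i).1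
        + (c i).2 * b) ∧
      ((F.card : ℝ) ≤ Real.exp ((c i).2 * a)) ∧
      Z ∩ mistakeBall f g (c i).1 (c i).2 ε ⊆ ⋃ z ∈ F, bowenBall f z (c i).2 δ := by
    intro i
    obtain ⟨F, h1, h2, h3⟩ := core_cover f φ g Z (c i).1 (c i).2 ε δ γ C v E
      hε hγ0 hγ2 (hgN _ (hc.1 i).2) hC hC0 hv hv0 hE hEne hδε hδ0
    refine ⟨F, fun z hz => ⟨(h1 z hz).1, by rw [hb]; exact (h1 z hz).2⟩, ?_, h3⟩
    rw [ha]; exact h2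
  choose F hF1 hF2 hF3 using hcore
  obtain ⟨c', hc'1, hc'2, hc'3⟩ := exists_enum (fun i => (F i).card + 1)
    (fun i => Nat.succ_pos _)
    (fun i k => ((Fin.cons (α := fun _ => X) (c i).1
      (fun k' => (((F i).equivFin.symm k' : X))) k : X), (c i).2))
    (fun p => ENNReal.ofReal (Real.exp (-(p.2:ℝ) * (s + (a + b)) + birkhoff f φ p.2 p.1)))
  have hadm : (∀ m, (c' m).1 ∈ Z ∧ N ≤ (c' m).2) ∧
      Z ⊆ ⋃ m, bowenBall f (c' m).1 (c' m).2 δ := by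
    constructor
    · intro m
      obtain ⟨i, k, hik⟩ := hc'1 m
      rw [hik]
      refine ⟨?_, (hc.1 i).2⟩
      show (Fin.cons (α := fun _ => X) (c i).1
        (fun k' => (((F i).equivFin.symm k' : X))) k : X) ∈ Z
      induction k using Fin.cases with
      | zero => rw [Fin.cons_zero]; exact (hc.1 i).1
      | succ k' => rw [Fin.cons_succ]; exact (hF1 i _ (Finset.coe_mem _)).1
    · intro y hy
      obtain ⟨U, ⟨i, rfl⟩, hyU⟩ := hc.2 hy
      obtain ⟨z, hzF, hyz⟩ := Set.mem_iUnion₂.1 (hF3 i ⟨hy, hyU⟩)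
      obtain ⟨m, hm⟩ := hc'2 i (((F i).equivFin ⟨z, hzF⟩).succ)
      refine Set.mem_iUnion.2 ⟨m, ?_⟩
      rw [hm]
      have heq : ((Fin.cons (α := fun _ => X) (c i).1
          (fun k' => (((F i).equivFin.symm k' : X)))
          (((F i).equivFin ⟨z, hzF⟩).succ) : X)) = z := by
        rw [Fin.cons_succ, Equiv.symm_apply_apply]
      simpa [heq] using hyz
  have hstep : mOut f φ (fun x n => bowenBall f x n δ) Z (s + (a + b)) N ≤
      ∑' m, ENNReal.ofReal (Real.exp (-((c' m).2:ℝ) * (s + (a + b)) +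
        birkhoff f φ (c' m).2 (c' m).1)) := iInf₂_le c' hadm
  have hfinal : ∑' i, ∑ k, (fun p : X × ℕ => ENNReal.ofReal
        (Real.exp (-(p.2:ℝ) * (s + (a + b)) + birkhoff f φ p.2 p.1)))
        (((Fin.cons (α := fun _ => X) (c i).1
          (fun k' => (((F i).equivFin.symm k' : X))) k : X), (c i).2)) ≤
      2 * ∑' i, ENNReal.ofReal
        (Real.exp (-((c i).2:ℝ) * s + birkhoff f φ (c i).2 (c i).1)) := by
    rw [← ENNReal.tsum_mul_left]
    refine ENNReal.tsum_le_tsum fun i => ?_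
    exact sum_fin_le f φ (c i).2 (c i).1 (F i) a b s ha0 hb0 (hF2 i)
      (fun z hz => (hF1 i z hz).2)
  exact le_trans hstep (le_trans (le_of_eq hc'3) hfinal)

end Stmt14Aux
namespace Stmt14Aux
open Mistake Filter Topology
open scoped ENNReal NNReal

set_option linter.unusedSectionVars false

variable {X : Type*} [MetricSpace X]

lemma exists_mLimit_zero [CompactSpace X] (f : X → X) (φ : X → ℝ) (C : ℝ)
    (hC : ∀ x, |φ x| ≤ C) (Z : Set X) (hZ : Z.Nonempty) (δ : ℝ) (hδ : 0 < δ) :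
    ∃ s : ℝ, mLimit f φ (fun x n => bowenBall f x n δ) Z s = 0 := by
  classical
  obtain ⟨z₀, hz₀⟩ := hZ
  -- a finite (δ/2)-net
  obtain ⟨E, hEcov⟩ := isCompact_univ.elim_finite_subcover (fun e : X => Metric.ball e (δ/2))
    (fun _ => Metric.isOpen_ball) (fun y _ => Set.mem_iUnion.2 ⟨y, Metric.mem_ball_self (by positivity)⟩)
  have hnet : ∀ y : X, ∃ e ∈ E, dist y e < δ/2 := by
    intro y
    obtain ⟨e, he, hy⟩ := Set.mem_iUnion₂.1 (hEcov (Set.mem_univ y))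
    exact ⟨e, he, by simpa [Metric.mem_ball] using hy⟩
  obtain ⟨e₀, he₀, _⟩ := hnet z₀
  haveI : Nonempty {e // e ∈ E} := ⟨⟨e₀, he₀⟩⟩
  set K : ℕ := E.card with hK
  have hK1 : 1 ≤ K := Finset.card_pos.2 ⟨e₀, he₀⟩
  refine ⟨C + Real.log K + 1, ?_⟩
  set s : ℝ := C + Real.log K + 1 with hs
  have main : ∀ N, mOut f φ (fun x n => bowenBall f x n δ) Z s N = 0 := by
    intro N
    -- cell machinery
    have key : ∀ M, N ≤ M → mOut f φ (fun x n => bowenBall f x n δ) Z s N ≤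
        ENNReal.ofReal (Real.exp (-(M:ℝ))) * 2 := by
      intro M hM
      set cell : ∀ n' : ℕ, (Fin n' → {e // e ∈ E}) → Set X := fun n' u =>
        {z | ∀ j : Fin n', f^[(j:ℕ)] z ∈ Metric.ball (u j : X) (δ/2)} with hcell
      set center : ∀ n' : ℕ, (Fin n' → {e // e ∈ E}) → X := fun n' u =>
        if h : (Z ∩ cell n' u).Nonempty then h.choose else z₀ with hcenter
      have hcenterZ : ∀ n' u, center n' u ∈ Z := by
        intro n' u
        rw [hcenter]
        by_cases h : (Z ∩ cell n' u).Nonempty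
        · simp only [dif_pos h]; exact h.choose_spec.1
        · simp only [dif_neg h]; exact hz₀
      set L : ℕ → ℕ := fun m => Fintype.card (Fin (M+m) → {e // e ∈ E}) with hL
      have hLpos : ∀ m, 0 < L m := fun m => Fintype.card_pos
      obtain ⟨c', hc'1, hc'2, hc'3⟩ := exists_enum L hLpos
        (fun m k => (center (M+m) ((Fintype.equivFin (Fin (M+m) → {e // e ∈ E})).symm k), M+m))
        (fun p => ENNReal.ofReal (Real.exp (-(p.2:ℝ) * s + birkhoff f φ p.2 p.1)))
      have hadm : (∀ m, (c' m).1 ∈ Z ∧ N ≤ (c' m).2) ∧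
          Z ⊆ ⋃ m, bowenBall f (c' m).1 (c' m).2 δ := by
        constructor
        · intro m
          obtain ⟨i, k, hik⟩ := hc'1 m
          rw [hik]
          exact ⟨hcenterZ _ _, by omega⟩
        · intro y hy
          have hu : ∀ j : Fin (M+0), ∃ e ∈ E, dist (f^[(j:ℕ)] y) e < δ/2 :=
            fun j => hnet _
          choose u hu1 hu2 using hu
          set uu : Fin (M+0) → {e // e ∈ E} := fun j => ⟨u j, hu1 j⟩ with huu
          have hycell : y ∈ cell (M+0) uu := by
            intro j
            simpa [Metric.mem_ball, huu] using hu2 j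
          have hne : (Z ∩ cell (M+0) uu).Nonempty := ⟨y, hy, hycell⟩
          have hcmem : center (M+0) uu ∈ Z ∩ cell (M+0) uu := by
            rw [hcenter]; simp only [dif_pos hne]; exact hne.choose_spec
          obtain ⟨m, hm⟩ := hc'2 0 (Fintype.equivFin (Fin (M+0) → {e // e ∈ E}) uu)
          refine Set.mem_iUnion.2 ⟨m, ?_⟩
          rw [hm]
          simp only [Equiv.symm_apply_apply]
          intro j hj
          have h1 := hcmem.2 ⟨j, hj⟩
          have h2 := hycell ⟨j, hj⟩
          rw [Metric.mem_ball] at h1 h2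
          calc dist (f^[j] (center (M+0) uu)) (f^[j] y)
              ≤ dist (f^[j] (center (M+0) uu)) (uu ⟨j, hj⟩ : X)
                + dist (uu ⟨j, hj⟩ : X) (f^[j] y) := dist_triangle _ _ _
            _ < δ/2 + δ/2 := add_lt_add h1 (by rw [dist_comm]; exact h2)
            _ = δ := by ring
      have hstep := iInf₂_le (f := fun (c : ℕ → X × ℕ)
        (_ : (∀ i, (c i).1 ∈ Z ∧ N ≤ (c i).2) ∧
          Z ⊆ ⋃ i, bowenBall f (c i).1 (c i).2 δ) =>
        ∑' i, ENNReal.ofReal (Real.exp (-((c i).2:ℝ) * s + birkhoff f φ (c i).2 (c i).1)))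
        c' hadm
      refine le_trans hstep (le_trans (le_of_eq hc'3) ?_)
      -- estimate the sum
      have hsum : ∀ m, ∑ k : Fin (L m), ENNReal.ofReal (Real.exp (-((M+m:ℕ):ℝ) * s +
          birkhoff f φ (M+m) (center (M+m) ((Fintype.equivFin (Fin (M+m) → {e // e ∈ E})).symm k))))
          ≤ ENNReal.ofReal (Real.exp (-(M:ℝ))) * ENNReal.ofReal (Real.exp (-1)) ^ m := by
        intro m
        have hterm : ∀ k : Fin (L m), ENNReal.ofReal (Real.exp (-((M+m:ℕ):ℝ) * s +
            birkhoff f φ (M+m) (center (M+m) ((Fintype.equivFin (Fin (M+m) → {e // e ∈ E})).symm k))))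
            ≤ ENNReal.ofReal (Real.exp (-((M+m:ℕ):ℝ) * s + ((M+m:ℕ):ℝ) * C)) := by
          intro k
          refine ENNReal.ofReal_le_ofReal (Real.exp_le_exp.2 ?_)
          have hb := abs_le.1 (abs_birkhoff_le (f := f) hC (M+m)
            (center (M+m) ((Fintype.equivFin (Fin (M+m) → {e // e ∈ E})).symm k)))
          linarith [hb.2]
        calc ∑ k : Fin (L m), ENNReal.ofReal (Real.exp (-((M+m:ℕ):ℝ) * s +
            birkhoff f φ (M+m) (center (M+m) ((Fintype.equivFin (Fin (M+m) → {e // e ∈ E})).symm k))))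
            ≤ (Finset.univ : Finset (Fin (L m))).card •
              ENNReal.ofReal (Real.exp (-((M+m:ℕ):ℝ) * s + ((M+m:ℕ):ℝ) * C)) :=
              Finset.sum_le_card_nsmul _ _ _ (fun k _ => hterm k)
          _ = ((K ^ (M+m) : ℕ) : ℝ≥0∞) *
              ENNReal.ofReal (Real.exp (-((M+m:ℕ):ℝ) * s + ((M+m:ℕ):ℝ) * C)) := by
              rw [nsmul_eq_mul, Finset.card_univ, Fintype.card_fin, hL]
              norm_num [Fintype.card_fun, Fintype.card_coe, hK]
          _ = ENNReal.ofReal ((K:ℝ) ^ (M+m) * Real.exp (-((M+m:ℕ):ℝ) * s + ((M+m:ℕ):ℝ) * C)) := by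
              rw [ENNReal.ofReal_mul (by positivity), ← Nat.cast_pow,
                ENNReal.ofReal_natCast, Nat.cast_pow]
          _ = ENNReal.ofReal (Real.exp (-(M:ℝ)) * Real.exp (-1) ^ m) := by
              congr 1
              have hKpow : (K:ℝ) ^ (M+m) = Real.exp (((M+m:ℕ):ℝ) * Real.log K) := by
                have hK0 : (0:ℝ) < K := by exact_mod_cast hK1
                rw [← Real.exp_log (pow_pos hK0 (M+m)), Real.log_pow]
              have hexpm : Real.exp (-1:ℝ) ^ m = Real.exp (-(m:ℝ)) := by
                rw [← Real.exp_nat_mul]; norm_num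
              rw [hKpow, hexpm, ← Real.exp_add, ← Real.exp_add, hs]
              push_cast
              ring
          _ ≤ ENNReal.ofReal (Real.exp (-(M:ℝ))) * ENNReal.ofReal (Real.exp (-1)) ^ m := by
              rw [← ENNReal.ofReal_pow (Real.exp_nonneg _),
                ← ENNReal.ofReal_mul (Real.exp_nonneg _)]
      calc ∑' m, ∑ k : Fin (L m), ENNReal.ofReal (Real.exp (-(((M+m:ℕ)):ℝ) * s +
            birkhoff f φ (M+m) (center (M+m) ((Fintype.equivFin (Fin (M+m) → {e // e ∈ E})).symm k))))
          ≤ ∑' m, ENNReal.ofReal (Real.exp (-(M:ℝ))) * ENNReal.ofReal (Real.exp (-1)) ^ m :=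
            ENNReal.tsum_le_tsum hsum
        _ = ENNReal.ofReal (Real.exp (-(M:ℝ))) * ∑' m, ENNReal.ofReal (Real.exp (-1)) ^ m :=
            ENNReal.tsum_mul_left
        _ ≤ ENNReal.ofReal (Real.exp (-(M:ℝ))) * 2 := by
            refine mul_le_mul_right ?_ _
            rw [ENNReal.tsum_geometric]
            have hr : ENNReal.ofReal (Real.exp (-1:ℝ)) ≤ 2⁻¹ := by
              have h2e : (2:ℝ) ≤ Real.exp 1 := by
                have := Real.add_one_le_exp (1:ℝ)
                linarith
              have : Real.exp (-1:ℝ) ≤ 1/2 := by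
                rw [Real.exp_neg]
                rw [inv_le_comm₀ (Real.exp_pos 1) (by norm_num)] at *
                · linarith
              calc ENNReal.ofReal (Real.exp (-1:ℝ)) ≤ ENNReal.ofReal (1/2) :=
                    ENNReal.ofReal_le_ofReal this
                _ = 2⁻¹ := by rw [ENNReal.ofReal_div_of_pos] <;> norm_num
            have h1 := tsub_le_tsub_left hr (1 : ℝ≥0∞)
            rw [ENNReal.one_sub_inv_two] at h1
            calc (1 - ENNReal.ofReal (Real.exp (-1:ℝ)))⁻¹ ≤ ((2:ℝ≥0∞)⁻¹)⁻¹ :=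
                  ENNReal.inv_le_inv' h1
              _ = 2 := inv_inv 2
    -- conclude zero
    refine le_antisymm ?_ zero_le
    refine ENNReal.le_of_forall_pos_le_add fun ε' hε' _ => ?_
    have htd : Filter.Tendsto (fun M : ℕ => Real.exp (-(M:ℝ))) Filter.atTop (𝓝 0) :=
      Real.tendsto_exp_neg_atTop_nhds_zero.comp tendsto_natCast_atTop_atTop
    have hev : ∀ᶠ M : ℕ in atTop, Real.exp (-(M:ℝ)) < (ε':ℝ)/2 := by
      refine htd.eventually_lt_const ?_
      have : (0:ℝ) < (ε':ℝ) := by exact_mod_cast hε'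
      linarith
    obtain ⟨M, hM1, hM2⟩ := (hev.and (eventually_ge_atTop N)).exists
    calc mOut f φ (fun x n => bowenBall f x n δ) Z s N
        ≤ ENNReal.ofReal (Real.exp (-(M:ℝ))) * 2 := key M hM2
      _ ≤ ENNReal.ofReal ((ε':ℝ)/2) * 2 := by
          exact mul_le_mul_left (ENNReal.ofReal_le_ofReal hM1.le) _
      _ = ENNReal.ofReal ((ε':ℝ)/2 * 2) := by
          rw [ENNReal.ofReal_mul (by positivity)]; norm_num
      _ = (ε' : ℝ≥0∞) := by
          rw [div_mul_cancel₀]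
          · exact ENNReal.ofReal_coe_nnreal
          · norm_num
      _ ≤ 0 + ε' := by rw [zero_add]
  rw [mLimit]
  simp only [main]
  exact iSup_const

end Stmt14Aux
namespace Stmt14Aux
open Mistake Filter Topology
open scoped ENNReal NNReal

set_option linter.unusedSectionVars false

lemma gamma_logs {γ : ℝ} (h1 : 0 < γ) (h2 : γ ≤ 1/2) :
    γ * Real.log (1/γ) ≤ 2 * Real.sqrt γ ∧ Real.log (1/(1-γ)) ≤ 2 * γ := by
  have h1γ : 0 < 1 - γ := by linarith
  have hsq : 0 < Real.sqrt γ := Real.sqrt_pos.2 h1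
  constructor
  · have e1 : (1/γ) = (1/Real.sqrt γ)^2 := by
      rw [div_pow, one_pow, Real.sq_sqrt h1.le]
    have e2 : Real.log (1/γ) = 2 * Real.log (1/Real.sqrt γ) := by
      rw [e1, Real.log_pow]; push_cast; ring
    have e3 : Real.log (1/Real.sqrt γ) ≤ 1/Real.sqrt γ := by
      have := Real.log_le_sub_one_of_pos (show (0:ℝ) < 1/Real.sqrt γ by positivity)
      linarith
    have e4 : γ * (1/Real.sqrt γ) = Real.sqrt γ := by
      rw [mul_one_div, div_eq_iff hsq.ne', Real.mul_self_sqrt h1.le]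
    calc γ * Real.log (1/γ) = 2 * (γ * Real.log (1/Real.sqrt γ)) := by rw [e2]; ring
      _ ≤ 2 * (γ * (1/Real.sqrt γ)) := by
          refine mul_le_mul_of_nonneg_left (mul_le_mul_of_nonneg_left e3 h1.le) (by norm_num)
      _ = 2 * Real.sqrt γ := by rw [e4]
  · have e5 := Real.log_le_sub_one_of_pos (show (0:ℝ) < 1/(1-γ) by positivity)
    have e6 : 1/(1-γ) ≤ 1 + 2*γ := by
      rw [div_le_iff₀ h1γ]; nlinarith
    linarith

variable {X : Type*} [MetricSpace X]

lemma key2 [CompactSpace X] (f : X → X) (φ : X → ℝ) (hφ : Continuous φ) (g : ℕ → ℝ → ℝ)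
    (hg : IsMistakeFunction g) (hg0 : ∀ n ε, 0 ≤ g n ε)
    (C : ℝ) (hC : ∀ x, |φ x| ≤ C) (hC0 : 0 ≤ C)
    (Z : Set X) (hZ : Z.Nonempty) (δ η : ℝ) (hδ : 0 < δ) (hη : 0 < η) :
    ∃ ε > 0, presAt f φ (fun x n => bowenBall f x n δ) Z
      ≤ presAt f φ (fun x n => mistakeBall f g x n ε) Z + η := by
  classical
  obtain ⟨z₀, hz₀⟩ := hZ
  -- net at δ/4
  obtain ⟨E, hEcov⟩ := isCompact_univ.elim_finite_subcover (fun e : X => Metric.ball e (δ/4))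
    (fun _ => Metric.isOpen_ball) (fun y _ => Set.mem_iUnion.2 ⟨y, Metric.mem_ball_self (by positivity)⟩)
  have hE : ∀ y : X, ∃ e ∈ E, dist y e ≤ δ/4 := by
    intro y
    obtain ⟨e, he, hy⟩ := Set.mem_iUnion₂.1 (hEcov (Set.mem_univ y))
    exact ⟨e, he, le_of_lt (by simpa [Metric.mem_ball] using hy)⟩
  obtain ⟨e₀, he₀, _⟩ := hE z₀
  have hEne : E.Nonempty := ⟨e₀, he₀⟩
  set LK : ℝ := Real.log E.card with hLK
  have hLK0 : 0 ≤ LK := Real.log_nonneg (by exact_mod_cast hEne.card_pos)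
  -- choose γ
  set γ : ℝ := min (1/2) (min ((η/16)^2) (η/(8*(1+LK+C)))) with hγdef
  have hγ0 : 0 < γ := by
    refine lt_min (by norm_num) (lt_min (by positivity) (by positivity))
  have hγ2 : γ ≤ 1/2 := min_le_left _ _
  have hγa : γ ≤ (η/16)^2 := le_trans (min_le_right _ _) (min_le_left _ _)
  have hγb : γ ≤ η/(8*(1+LK+C)) := le_trans (min_le_right _ _) (min_le_right _ _)
  have hsmall : γ * Real.log (1/γ) + Real.log (1/(1-γ)) + γ*LK + 2*γ*C ≤ η/2 := by
    obtain ⟨hl1, hl2⟩ := gamma_logs hγ0 hγ2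
    have hsγ : Real.sqrt γ ≤ η/16 := by
      calc Real.sqrt γ ≤ Real.sqrt ((η/16)^2) := Real.sqrt_le_sqrt hγa
        _ = η/16 := Real.sqrt_sq (by positivity)
    have hlin : γ * (2 + LK + 2*C) ≤ η/4 := by
      have h8 : (0:ℝ) < 8*(1+LK+C) := by positivity
      have := mul_le_mul_of_nonneg_right hγb (le_of_lt (show (0:ℝ) < 2+LK+2*C by positivity))
      calc γ * (2 + LK + 2*C) ≤ η/(8*(1+LK+C)) * (2+LK+2*C) := this
        _ ≤ η/4 := by
            rw [div_mul_eq_mul_div, div_le_div_iff₀ h8 (by norm_num)]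
            nlinarith
    nlinarith
  -- uniform continuity
  have huc := CompactSpace.uniformContinuous_of_continuous hφ
  rw [Metric.uniformContinuous_iff] at huc
  obtain ⟨ε₁', hε₁', huc2⟩ := huc (η/2) (by positivity)
  set ε₁ : ℝ := ε₁'/2 with hε₁def
  have hv : ∀ a b : X, dist a b ≤ ε₁ → |φ a - φ b| ≤ η/2 := by
    intro a b hab
    have := huc2 (a := a) (b := b) (by rw [hε₁def] at hab; linarith)
    rw [Real.dist_eq] at this; exact this.le
  -- choose ε
  obtain ⟨L, hL1, hL2⟩ := hg.lim
  have hev1 : ∀ᶠ ε in 𝓝[>] (0:ℝ), L ε < γ/2 := hL2.eventually_lt_const (by positivity)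
  have hev2 : ∀ᶠ ε in 𝓝[>] (0:ℝ), ε ≤ min ε₁ (δ/4) := by
    refine Filter.eventually_iff_exists_mem.2 ⟨Set.Ioc 0 (min ε₁ (δ/4)), ?_, fun x hx => hx.2⟩
    refine Ioc_mem_nhdsGT_of_mem ⟨le_refl _, ?_⟩
    refine lt_min (by positivity) (by positivity)
  obtain ⟨ε, ⟨hε0, hLε⟩, hεle⟩ := ((eventually_mem_nhdsWithin.and hev1).and hev2).exists
  rw [Set.mem_Ioi] at hε0
  have hεε₁ : ε ≤ ε₁ := le_trans hεle (min_le_left _ _)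
  have hεδ : ε ≤ δ/4 := le_trans hεle (min_le_right _ _)
  -- choose N₀
  have hevn : ∀ᶠ n : ℕ in atTop, g n ε / n < γ := (hL1 ε hε0).eventually_lt_const (by linarith)
  obtain ⟨N₀, hN₀⟩ := eventually_atTop.1 hevn
  set N₁ : ℕ := max N₀ 1 with hN₁def
  have hgN : ∀ n, N₁ ≤ n → g n ε ≤ γ * n := by
    intro n hn
    have hn1 : 1 ≤ n := le_trans (le_max_right _ _) hn
    have hn0 : (0:ℝ) < n := by exact_mod_cast hn1
    have := hN₀ n (le_trans (le_max_left _ _) hn)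
    rw [div_lt_iff₀ hn0] at this
    linarith
  refine ⟨ε, hε0, ?_⟩
  set τ : ℝ := (γ*Real.log (1/γ) + Real.log (1/(1-γ)) + γ*LK) + (η/2 + 2*γ*C) with hτdef
  have hτη : τ ≤ η := by rw [hτdef]; linarith
  have hτ0 : 0 ≤ τ := by
    have l1 : 0 ≤ Real.log (1/γ) := Real.log_nonneg (one_le_one_div hγ0 (by linarith))
    have l2 : 0 ≤ Real.log (1/(1-γ)) := Real.log_nonneg (one_le_one_div (by linarith) (by linarith))
    rw [hτdef]; positivity
  -- the zero-set implication
  have himp : ∀ s : ℝ, mLimit f φ (fun x n => mistakeBall f g x n ε) Z s = 0 →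
      mLimit f φ (fun x n => bowenBall f x n δ) Z (s + τ) = 0 := by
    intro s hs0
    rw [mLimit]
    rw [ENNReal.iSup_eq_zero]
    intro N
    set N' : ℕ := max N N₁ with hN'def
    refine le_antisymm ?_ zero_le
    refine le_trans (mOut_mono_N f φ _ Z (s+τ) (le_max_left N N₁)) ?_
    refine ENNReal.le_of_forall_pos_le_add fun ε' hε' _ => ?_
    have hg0' : mOut f φ (fun x n => mistakeBall f g x n ε) Z s N' = 0 := by
      refine le_antisymm ?_ zero_le
      rw [← hs0]
      exact le_iSup (fun N => mOut f φ (fun x n => mistakeBall f g x n ε) Z s N) N'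
    have hpos : (0:ℝ≥0∞) < ENNReal.ofReal ((ε':ℝ)/2) := by
      rw [ENNReal.ofReal_pos]
      have : (0:ℝ) < (ε':ℝ) := by exact_mod_cast hε'
      linarith
    rw [mOut] at hg0'
    have hlt := hg0'.trans_lt hpos
    rw [iInf_lt_iff] at hlt
    obtain ⟨c, hlt2⟩ := hlt
    rw [iInf_lt_iff] at hlt2
    obtain ⟨hc, hlt3⟩ := hlt2
    have hkey := mOut_cl_le f φ g Z ε δ γ C (η/2) s E N'
      hε0 hγ0 hγ2 hC hC0 (fun a b hab => hv a b (le_trans hab hεε₁)) (by positivity)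
      hE hEne hεδ hδ (fun n hn => hgN n (le_trans (le_max_right N N₁) hn)) c hc
    calc mOut f φ (fun x n => bowenBall f x n δ) Z (s + τ) N'
        ≤ 2 * ∑' i, ENNReal.ofReal
            (Real.exp (-((c i).2:ℝ) * s + birkhoff f φ (c i).2 (c i).1)) := hkey
      _ ≤ 2 * ENNReal.ofReal ((ε':ℝ)/2) := mul_le_mul_right hlt3.le _
      _ = ENNReal.ofReal (2 * ((ε':ℝ)/2)) := by
          rw [ENNReal.ofReal_mul (by norm_num), ENNReal.ofReal_ofNat]
      _ = (ε' : ℝ≥0∞) := by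
          rw [show (2:ℝ) * ((ε':ℝ)/2) = (ε':ℝ) by ring]
          exact ENNReal.ofReal_coe_nnreal
      _ ≤ 0 + ε' := by rw [zero_add]
  -- conclude with sInf juggling
  have hZclne : ∃ s : ℝ, mLimit f φ (fun x n => bowenBall f x n δ) Z s = 0 :=
    exists_mLimit_zero f φ C hC Z ⟨z₀, hz₀⟩ δ hδ
  have hZgne : {s : ℝ | mLimit f φ (fun x n => mistakeBall f g x n ε) Z s = 0}.Nonempty := by
    obtain ⟨s, hs⟩ := exists_mLimit_zero f φ C hC Z ⟨z₀, hz₀⟩ ε hε0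
    refine ⟨s, ?_⟩
    have hmono : mLimit f φ (fun x n => mistakeBall f g x n ε) Z s ≤
        mLimit f φ (fun x n => bowenBall f x n ε) Z s :=
      iSup_mono fun N => mOut_mono_B (fun x n => bowen_subset_mistake hg0 x n ε) Z s N
    rw [hs] at hmono
    exact le_antisymm hmono zero_le
  have hbddcl : BddBelow {s : ℝ | mLimit f φ (fun x n => bowenBall f x n δ) Z s = 0} :=
    ⟨-C-1, fun s hs => zeroset_bddBelow hC _ Z s hs⟩
  have hbddg : BddBelow {s : ℝ | mLimit f φ (fun x n => mistakeBall f g x n ε) Z s = 0} :=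
    ⟨-C-1, fun s hs => zeroset_bddBelow hC _ Z s hs⟩
  have hle : presAt f φ (fun x n => bowenBall f x n δ) Z ≤
      presAt f φ (fun x n => mistakeBall f g x n ε) Z + τ := by
    rw [presAt, presAt]
    have step : ∀ s ∈ {s : ℝ | mLimit f φ (fun x n => mistakeBall f g x n ε) Z s = 0},
        sInf {s : ℝ | mLimit f φ (fun x n => bowenBall f x n δ) Z s = 0} - τ ≤ s := by
      intro s hs
      have := csInf_le hbddcl (himp s hs)
      linarith
    have := le_csInf hZgne step
    linarith
  exact hle.trans (by linarith)

end Stmt14Aux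


open Stmt14Aux in
open Mistake in
/-- main theorem: the Pesin pressure with a mistake function equals
the classical Pesin pressure on every subset `Z`. -/
theorem stmt14 {X : Type*} [MetricSpace X] [CompactSpace X] (f : X → X)
    (hf : Continuous f) (φ : X → ℝ) (hφ : Continuous φ)
    (g : ℕ → ℝ → ℝ) (hg : Mistake.IsMistakeFunction g) (hg0 : ∀ n ε, 0 ≤ g n ε)
    (hge : ∀ n : ℕ, ∀ ε₁ ε₂ : ℝ, 0 < ε₁ → ε₁ ≤ ε₂ → g n ε₁ ≤ g n ε₂)
    (Z : Set X) :
    pres f φ (fun x n δ => mistakeBall f g x n δ) Z =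
      pres f φ (fun x n δ => bowenBall f x n δ) Z := by
  classical
  by_cases hZ : Z.Nonempty
  swap
  · -- Z is empty
    have hZe : Z = ∅ := Set.not_nonempty_iff_eq_empty.1 hZ
    subst hZe
    have hmOut : ∀ (B : X → ℕ → Set X) (s : ℝ) (N : ℕ), mOut f φ B (∅ : Set X) s N = ⊤ := by
      intro B s N
      rw [mOut]
      refine iInf_eq_top.2 fun c => ?_
      exact iInf_neg fun hc => (Set.notMem_empty _ ((hc.1 0).1))
    have hpres : ∀ B : X → ℕ → ℝ → Set X, pres f φ B (∅ : Set X) = 0 := by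
      intro B
      rw [pres]
      have h1 : ∀ δ : ℝ, presAt f φ (fun x n => B x n δ) (∅ : Set X) = 0 := by
        intro δ
        rw [presAt]
        have hempty : {s : ℝ | mLimit f φ (fun x n => B x n δ) (∅ : Set X) s = 0} = ∅ := by
          ext s
          simp only [Set.mem_setOf_eq, Set.mem_empty_iff_false, iff_false]
          intro h0
          have htop := hmOut (fun x n => B x n δ) s 0
          have hle : (⊤:ℝ≥0∞) ≤ mLimit f φ (fun x n => B x n δ) (∅ : Set X) s := by
            rw [mLimit, ← htop]
            exact le_iSup (fun N => mOut f φ (fun x n => B x n δ) (∅ : Set X) s N) 0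
          rw [h0] at hle
          simp at hle
        rw [hempty, Real.sInf_empty]
      have h2 : {p : ℝ | ∃ δ > (0:ℝ), p = presAt f φ (fun x n => B x n δ) (∅ : Set X)}
          = {0} := by
        ext p
        simp only [Set.mem_setOf_eq, Set.mem_singleton_iff]
        constructor
        · rintro ⟨δ, hδ, rfl⟩; exact h1 δ
        · rintro rfl; exact ⟨1, one_pos, (h1 1).symm⟩
      rw [h2, csSup_singleton]
    rw [hpres, hpres]
  · -- Z nonempty
    obtain ⟨z₀, hz₀⟩ := hZ
    obtain ⟨zC, _, hzC⟩ := isCompact_univ.exists_isMaxOn ⟨z₀, Set.mem_univ z₀⟩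
      (continuous_abs.comp hφ).continuousOn
    set C : ℝ := |φ zC| with hCdef
    have hC : ∀ x, |φ x| ≤ C := fun x => (isMaxOn_iff.1 hzC) x (Set.mem_univ x)
    have hC0 : 0 ≤ C := abs_nonneg _
    set Pg : ℝ → ℝ := fun δ => presAt f φ (fun x n => mistakeBall f g x n δ) Z with hPg
    set Pcl : ℝ → ℝ := fun δ => presAt f φ (fun x n => bowenBall f x n δ) Z with hPcl
    have hKEY1 : ∀ δ : ℝ, 0 < δ → Pg δ ≤ Pcl δ := by
      intro δ hδ
      have hsub : {s : ℝ | mLimit f φ (fun x n => bowenBall f x n δ) Z s = 0} ⊆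
          {s : ℝ | mLimit f φ (fun x n => mistakeBall f g x n δ) Z s = 0} := by
        intro s hs
        refine le_antisymm ?_ zero_le
        refine le_trans (iSup_mono fun N =>
          mOut_mono_B (fun x n => bowen_subset_mistake hg0 x n δ) Z s N) (le_of_eq hs)
      have hbddg : BddBelow {s : ℝ | mLimit f φ (fun x n => mistakeBall f g x n δ) Z s = 0} :=
        ⟨-C-1, fun s hs => zeroset_bddBelow hC _ Z s hs⟩
      have hclne : {s : ℝ | mLimit f φ (fun x n => bowenBall f x n δ) Z s = 0}.Nonempty :=
        exists_mLimit_zero f φ C hC Z ⟨z₀, hz₀⟩ δ hδ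
      exact csInf_le_csInf hbddg hclne hsub
    have hKEY2 : ∀ δ η : ℝ, 0 < δ → 0 < η → ∃ ε > 0, Pcl δ ≤ Pg ε + η := by
      intro δ η hδ hη
      exact key2 f φ hφ g hg hg0 C hC hC0 Z ⟨z₀, hz₀⟩ δ η hδ hη
    show sSup {p : ℝ | ∃ δ > (0:ℝ), p = Pg δ} = sSup {p : ℝ | ∃ δ > (0:ℝ), p = Pcl δ}
    have hSgne : {p : ℝ | ∃ δ > (0:ℝ), p = Pg δ}.Nonempty := ⟨Pg 1, 1, one_pos, rfl⟩
    have hSclne : {p : ℝ | ∃ δ > (0:ℝ), p = Pcl δ}.Nonempty := ⟨Pcl 1, 1, one_pos, rfl⟩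
    by_cases hbdd : BddAbove {p : ℝ | ∃ δ > (0:ℝ), p = Pcl δ}
    · have hbddg : BddAbove {p : ℝ | ∃ δ > (0:ℝ), p = Pg δ} := by
        obtain ⟨b, hb⟩ := hbdd
        refine ⟨b, ?_⟩
        rintro p ⟨δ, hδ, rfl⟩
        exact le_trans (hKEY1 δ hδ) (hb ⟨δ, hδ, rfl⟩)
      refine le_antisymm ?_ ?_
      · refine csSup_le hSgne ?_
        rintro p ⟨δ, hδ, rfl⟩
        exact le_trans (hKEY1 δ hδ) (le_csSup hbdd ⟨δ, hδ, rfl⟩)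
      · refine csSup_le hSclne ?_
        rintro p ⟨δ, hδ, rfl⟩
        refine le_of_forall_pos_le_add ?_
        intro η hη
        obtain ⟨ε, hε, hkey⟩ := hKEY2 δ η hδ hη
        exact le_trans hkey (add_le_add_left (le_csSup hbddg ⟨ε, hε, rfl⟩) η)
    · have hbddg : ¬ BddAbove {p : ℝ | ∃ δ > (0:ℝ), p = Pg δ} := by
        rintro ⟨b, hb⟩
        refine hbdd ⟨b + 1, ?_⟩
        rintro p ⟨δ, hδ, rfl⟩
        obtain ⟨ε, hε, hkey⟩ := hKEY2 δ 1 hδ one_pos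
        exact le_trans hkey (add_le_add_left (hb ⟨ε, hε, rfl⟩) 1)
      rw [Real.sSup_of_not_bddAbove hbdd, Real.sSup_of_not_bddAbove hbddg]
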